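/- The inequality θ̄·z⁻ + θ ≤ θ̄ is valid on P₀ ∪ P₁ ∪ P₂, and hence on conv(P₀ ∪ P₁ ∪ P₂). -/
import Mathlib


abbrev Pt := ℝ × ℝ × ℝ × ℝ × ℝ

def P0 (tl tu : ℝ) : Set Pt :=
  {p | p.1 = 0 ∧ p.2.1 = 0 ∧ p.2.2.1 = 0 ∧ p.2.2.2.2 = 0 ∧ tl ≤ p.2.2.2.1 ∧ p.2.2.2.1 ≤ tu}

def P1 (tu bl bu : ℝ) : Set Pt :=
  {p | p.1 = 1 ∧ p.2.1 = 1 ∧ p.2.2.1 = 0 ∧ 0 ≤ p.2.2.2.1 ∧ p.2.2.2.1 ≤ tu ∧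
    bl * p.2.2.2.1 ≤ p.2.2.2.2 ∧ p.2.2.2.2 ≤ bu * p.2.2.2.1}

def P2 (tl bl bu : ℝ) : Set Pt :=
  {p | p.1 = 1 ∧ p.2.1 = 0 ∧ p.2.2.1 = 1 ∧ tl ≤ p.2.2.2.1 ∧ p.2.2.2.1 ≤ 0 ∧
    bu * p.2.2.2.1 ≤ p.2.2.2.2 ∧ p.2.2.2.2 ≤ bl * p.2.2.2.1}

theorem stmt_4 (tl tu bl bu : ℝ) (h1 : tl < 0) (h2 : 0 < tu) (h3 : bl < 0) (h4 : 0 < bu) :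
    (∀ p ∈ P0 tl tu ∪ P1 tu bl bu ∪ P2 tl bl bu,
      tu * p.2.2.1 + p.2.2.2.1 ≤ tu) ∧
    (∀ p ∈ convexHull ℝ (P0 tl tu ∪ P1 tu bl bu ∪ P2 tl bl bu),
      tu * p.2.2.1 + p.2.2.2.1 ≤ tu) := by
  have hval : ∀ p ∈ P0 tl tu ∪ P1 tu bl bu ∪ P2 tl bl bu,
      tu * p.2.2.1 + p.2.2.2.1 ≤ tu := by
    rintro p ((⟨_, _, h0, _, _, h0'⟩ | ⟨_, _, h0, _, h0', _, _⟩) | ⟨_, _, h0, _, h0', _, _⟩) <;>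
      rw [h0] <;> nlinarith
  refine ⟨hval, ?_⟩
  have hconv : Convex ℝ {p : Pt | tu * p.2.2.1 + p.2.2.2.1 ≤ tu} :=
    convex_halfSpace_le
      ⟨by intro p q; simp; ring, by intro c p; simp; ring⟩ tu
  exact fun p hp => convexHull_min hval hconv hp
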